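/- Let (S,+) be a commutative cancellative semigroup and let (S−S,+) denote its difference group. If A ⊆ S is a J-set in S, then A is a J-set in S−S. -/

import Mathlib

/-- Left fold of addition: `addList x [y₁,…,yₙ] = x + y₁ + ⋯ + yₙ`.  This expresses the
sum of a nonempty finite list of elements of a semigroup (no identity needed). -/
def addList {T : Type*} [Add T] : T → List T → T
  | x, [] => x
  | x, y :: l => addList (x + y) l

/-- A subset `A` of a commutative additive semigroup `T` is a *J-set* if for every finite
nonempty set `F` of sequences `f : ℕ → T` there exist `a ∈ T` and a finite nonempty
`H ⊆ ℕ` (encoded as a strictly increasing list `t₀ :: ts`) such that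
`a + Σ_{t ∈ H} f(t) ∈ A` for every `f ∈ F`. -/
def AddJSet {T : Type*} [Add T] (A : Set T) : Prop :=
  ∀ F : Finset (ℕ → T), F.Nonempty →
    ∃ (a : T) (t₀ : ℕ) (ts : List ℕ), (t₀ :: ts).Chain' (· < ·) ∧
      ∀ f ∈ F, a + addList (f t₀) (ts.map f) ∈ A

private lemma addList_eq_sum {T : Type*} [AddMonoid T] (x : T) (l : List T) :
    addList x l = x + l.sum := by
  induction l generalizing x with
  | nil => simp [addList]
  | cons y l ih => simp [addList, ih, add_assoc]

private lemma phi_addList {S G : Type*} [Add S] [Add G] (φ : S → G)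
    (hhom : ∀ x y : S, φ (x + y) = φ x + φ y) (x : S) (l : List S) :
    φ (addList x l) = addList (φ x) (l.map φ) := by
  induction l generalizing x with
  | nil => simp [addList]
  | cons y l ih => simp [addList, ih, hhom]

private lemma sum_map_add {T : Type*} [AddCommMonoid T] (l : List ℕ) (f c : ℕ → T) :
    (l.map (fun t => f t + c t)).sum = (l.map f).sum + (l.map c).sum := by
  induction l with
  | nil => simp
  | cons y l ih =>
    simp only [List.map_cons, List.sum_cons, ih]
    abel

private lemma exists_add_sum {S G : Type*} [Add S] [AddCommGroup G] (φ : S → G)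
    (hhom : ∀ x y : S, φ (x + y) = φ x + φ y) (l : List S) (x : S) :
    ∃ u : S, φ x + (l.map φ).sum = φ u := by
  induction l generalizing x with
  | nil => exact ⟨x, by simp⟩
  | cons a l ih =>
    obtain ⟨u, hu⟩ := ih (x + a)
    exact ⟨u, by rw [← hu, hhom]; simp; abel⟩

private lemma exists_key {S G : Type*} [Add S] [AddCommGroup G] (φ : S → G)
    (hhom : ∀ x y : S, φ (x + y) = φ x + φ y)
    (l : List S) (x s : S) (hs : s ∈ l) :
    ∃ u : S, φ x + ((l.map φ).sum - φ s) = φ u := by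
  induction l generalizing x with
  | nil => simp at hs
  | cons a l ih =>
    rcases List.mem_cons.mp hs with h | h
    · subst h
      obtain ⟨u, hu⟩ := exists_add_sum φ hhom l x
      exact ⟨u, by rw [← hu]; simp only [List.map_cons, List.sum_cons]; abel⟩
    · obtain ⟨u, hu⟩ := ih (x + a) h
      refine ⟨u, ?_⟩
      rw [← hu, hhom]
      simp only [List.map_cons, List.sum_cons]
      abel

/-- Let `(S,+)` be a commutative cancellative semigroup and let `(G,+)` together with the
injective additive embedding `φ : S → G` be its difference group.  If `A ⊆ S` is a J-set
in `S`, then `A` is a J-set in `G = S - S`. -/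
theorem addJSet_image_of_addJSet {S G : Type*}
    [AddCommSemigroup S] [IsCancelAdd S] [AddCommGroup G]
    (φ : S → G) (hinj : Function.Injective φ)
    (hhom : ∀ x y : S, φ (x + y) = φ x + φ y)
    (hdiff : ∀ g : G, ∃ a b : S, g = φ a - φ b)
    (A : Set S) (hA : AddJSet A) : AddJSet (φ '' A) := by
  classical
  -- S is nonempty
  obtain ⟨s₀, -, -⟩ := hdiff 0
  intro F hF
  -- choose representations of each element of G as a difference
  choose X Y hXY using hdiff
  -- the correction term
  set c : ℕ → G := fun t => (F.toList.map (fun f => φ (Y (f t)))).sum with hc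
  -- existence of lifts
  have hex : ∀ f ∈ F, ∀ t : ℕ, ∃ u : S, φ u = f t + c t := by
    intro f hf t
    have hmem : Y (f t) ∈ F.toList.map (fun g => Y (g t)) :=
      List.mem_map_of_mem (f := fun g => Y (g t)) (Finset.mem_toList.mpr hf)
    obtain ⟨u, hu⟩ := exists_key φ hhom (F.toList.map (fun g => Y (g t)))
      (X (f t)) (Y (f t)) hmem
    refine ⟨u, ?_⟩
    have h2 : c t = ((F.toList.map (fun g => Y (g t))).map φ).sum := by
      rw [hc]; simp [List.map_map, Function.comp]
    rw [h2, hXY (f t), ← hu]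
    abel
  -- the lift map
  set σ : (ℕ → G) → ℕ → S := fun f t =>
    if h : ∃ u : S, φ u = f t + c t then h.choose else s₀ with hσ
  have hσspec : ∀ f ∈ F, ∀ t, φ (σ f t) = f t + c t := by
    intro f hf t
    have h := hex f hf t
    simp only [hσ, dif_pos h]
    exact h.choose_spec
  -- apply the J-set property in S
  obtain ⟨a, t₀, ts, hchain, hmem⟩ := hA (F.image σ) (hF.image σ)
  refine ⟨φ a + (c t₀ + (ts.map c).sum), t₀, ts, hchain, ?_⟩
  intro f hf
  have hmemA : a + addList (σ f t₀) (ts.map (σ f)) ∈ A :=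
    hmem (σ f) (Finset.mem_image_of_mem σ hf)
  refine ⟨a + addList (σ f t₀) (ts.map (σ f)), hmemA, ?_⟩
  rw [hhom, phi_addList φ hhom, addList_eq_sum, addList_eq_sum]
  have h1 : List.map φ (List.map (σ f) ts) = List.map (fun t => f t + c t) ts := by
    rw [List.map_map]
    exact List.map_congr_left fun t _ => hσspec f hf t
  rw [h1, hσspec f hf t₀, sum_map_add]
  abel
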